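/- Suppose U_P ⊆ U_R are pattern groups on {1,2,…,n} over F_q with U_P normal in U_R. Then x(h−1)y + 1 ∈ U_P for all x, y ∈ U_R and all h ∈ U_P. -/

import Mathlib

/-!
STATEMENT 7: Suppose U_P ⊆ U_R are pattern groups on {1,…,n} over F_q with U_P normal
in U_R.  Then x(h−1)y + 1 ∈ U_P for all x, y ∈ U_R and all h ∈ U_P.
-/
open scoped Classical

noncomputable section

def setFinset {α : Type*} [Fintype α] (S : Set α) : Finset α :=
  Finset.univ.filter (· ∈ S)

/-- A strict partial order on `{1,…,n}` that is a subrelation of the usual order. -/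
def IsPatternOrder {n : ℕ} (P : Fin n → Fin n → Prop) : Prop :=
  (∀ i j, P i j → i < j) ∧ ∀ i j k, P i j → P j k → P i k

/-- The pattern group `U_P` of unipotent upper-triangular matrices supported on `P`. -/
def patternGroup (F : Type*) [Field F] {n : ℕ} (P : Fin n → Fin n → Prop) :
    Set (Matrix (Fin n) (Fin n) F) :=
  {u | (∀ i, u i i = 1) ∧ ∀ i j, i ≠ j → u i j ≠ 0 → P i j}

/-- `χ` is constant on the superclasses of `G`: `u ~ v` iff `v − 1 ∈ G(u−1)G`. -/
def IsSuperclassFn {A : Type*} [Ring A] (G : Set A) (χ : A → ℂ) : Prop :=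
  ∀ u ∈ G, ∀ v ∈ G, (∃ x ∈ G, ∃ y ∈ G, v - 1 = x * (u - 1) * y) → χ u = χ v

/-- Superinduction `SInd_H^G(χ)(g) = (1/(|G||H|)) Σ_{x,y∈G} χ̇(x(g−1)y + 1)`. -/
def SInd {A : Type*} [Ring A] [Fintype A] (G H : Set A) (χ : A → ℂ) (g : A) : ℂ :=
  (((setFinset G).card : ℂ) * ((setFinset H).card : ℂ))⁻¹ *
    ∑ x ∈ setFinset G, ∑ y ∈ setFinset G,
      if x * (g - 1) * y + 1 ∈ H then χ (x * (g - 1) * y + 1) else 0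

/-- Induction `Ind_H^G(χ)(g) = (1/|H|) Σ_{y∈G} χ̇(y⁻¹ g y)`. -/
def Ind {A : Type*} [Ring A] [Fintype A] (G H : Set A) (χ : A → ℂ) (g : A) : ℂ :=
  ((setFinset H).card : ℂ)⁻¹ *
    ∑ y ∈ setFinset G,
      if Ring.inverse y * g * y ∈ H then χ (Ring.inverse y * g * y) else 0

section Aux
variable {F : Type*} [Field F] {n : ℕ}

lemma mem_pattern_one_add (Q : Fin n → Fin n → Prop) {a b : Fin n} (hab : a ≠ b) (hQ : Q a b) :
    (1 + Matrix.single a b (1:F)) ∈ patternGroup F Q := by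
  constructor
  · intro i
    have h0 : (Matrix.single a b (1:F)) i i = 0 :=
      Matrix.single_apply_of_ne _ _ _ _ _ (by rintro ⟨rfl, rfl⟩; exact hab rfl)
    rw [Matrix.add_apply, Matrix.one_apply_eq, h0, add_zero]
  · intro i j hij hne
    by_cases hc : a = i ∧ b = j
    · obtain ⟨rfl, rfl⟩ := hc; exact hQ
    · exfalso
      rw [Matrix.add_apply, Matrix.one_apply_ne hij,
        Matrix.single_apply_of_ne _ _ _ _ _ hc, zero_add] at hne
      exact hne rfl

lemma one_add_inv {a b : Fin n} (hab : a ≠ b) :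
    (1 + Matrix.single a b (1:F))⁻¹ = 1 - Matrix.single a b (1:F) := by
  apply Matrix.inv_eq_right_inv
  have hEE : Matrix.single a b (1:F) * Matrix.single a b (1:F) = 0 :=
    Matrix.single_mul_single_of_ne _ _ _ _ (Ne.symm hab) 1
  rw [add_mul, one_mul, mul_sub, mul_one, hEE, sub_zero]
  abel

lemma conjA {i k l : Fin n} (hik : i ≠ k) (hkl : k ≠ l) (hil : i ≠ l) :
    (1 + Matrix.single i k (1:F)) * (1 + Matrix.single k l (1:F)) *
      (1 - Matrix.single i k (1:F)) =
    1 + Matrix.single k l (1:F) + Matrix.single i l (1:F) := by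
  have h1 : Matrix.single i k (1:F) * Matrix.single i k (1:F) = 0 :=
    Matrix.single_mul_single_of_ne _ _ _ _ (Ne.symm hik) 1
  have h2 : Matrix.single k l (1:F) * Matrix.single i k (1:F) = 0 :=
    Matrix.single_mul_single_of_ne _ _ _ _ (Ne.symm hil) 1
  have h3 : Matrix.single i l (1:F) * Matrix.single i k (1:F) = 0 :=
    Matrix.single_mul_single_of_ne _ _ _ _ (Ne.symm hil) 1
  have h4 : Matrix.single i k (1:F) * Matrix.single k l (1:F) =
      Matrix.single i l (1:F) := by
    rw [Matrix.single_mul_single_same, one_mul]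
  simp only [add_mul, mul_add, mul_sub, sub_mul, one_mul, mul_one, h1, h2, h3, h4]
  noncomm_ring

lemma conjB {k l j : Fin n} (hkl : k ≠ l) (hlj : l ≠ j) (hkj : k ≠ j) :
    (1 + Matrix.single l j (1:F)) * (1 + Matrix.single k l (1:F)) *
      (1 - Matrix.single l j (1:F)) =
    1 + Matrix.single k l (1:F) - Matrix.single k j (1:F) := by
  have h1 : Matrix.single l j (1:F) * Matrix.single k l (1:F) = 0 :=
    Matrix.single_mul_single_of_ne _ _ _ _ (Ne.symm hkj) 1
  have h2 : Matrix.single l j (1:F) * Matrix.single l j (1:F) = 0 :=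
    Matrix.single_mul_single_of_ne _ _ _ _ (Ne.symm hlj) 1
  have h3 : Matrix.single k l (1:F) * Matrix.single l j (1:F) =
      Matrix.single k j (1:F) := by
    rw [Matrix.single_mul_single_same, one_mul]
  simp only [add_mul, mul_add, mul_sub, sub_mul, one_mul, mul_one, h1, h2, h3]
  noncomm_ring

end Aux

theorem normal_pattern_subgroup_two_sided_stability
    {n : ℕ} (F : Type*) [Field F] [Fintype F]
    (P R : Fin n → Fin n → Prop)
    (hP : IsPatternOrder P) (hR : IsPatternOrder R)
    (hPR : ∀ i j, P i j → R i j)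
    (hnormal : ∀ x ∈ patternGroup F R, ∀ h ∈ patternGroup F P,
      x * h * x⁻¹ ∈ patternGroup F P) :
    ∀ x ∈ patternGroup F R, ∀ y ∈ patternGroup F R, ∀ h ∈ patternGroup F P,
      x * (h - 1) * y + 1 ∈ patternGroup F P := by
  intro x hx y hy h hh
  -- closure facts from normality
  have keyA : ∀ i k l : Fin n, R i k → P k l → P i l := by
    intro i k l hik hkl
    have h1 : i < k := hR.1 _ _ hik
    have h2 : k < l := hP.1 _ _ hkl
    have h3 : i < l := h1.trans h2
    have hxm := mem_pattern_one_add (F := F) R h1.ne hik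
    have hhm := mem_pattern_one_add (F := F) P h2.ne hkl
    have hconj := hnormal _ hxm _ hhm
    rw [one_add_inv h1.ne, conjA h1.ne h2.ne h3.ne] at hconj
    refine hconj.2 i l h3.ne ?_
    have e1 : (1 : Matrix (Fin n) (Fin n) F) i l = 0 := Matrix.one_apply_ne h3.ne
    have e2 : (Matrix.single k l (1:F)) i l = 0 :=
      Matrix.single_apply_of_ne _ _ _ _ _ (by rintro ⟨rfl, -⟩; exact h1.ne rfl)
    rw [Matrix.add_apply, Matrix.add_apply, e1, e2, Matrix.single_apply_same,
      zero_add, zero_add]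
    exact one_ne_zero
  have keyB : ∀ k l j : Fin n, P k l → R l j → P k j := by
    intro k l j hkl hlj
    have h1 : k < l := hP.1 _ _ hkl
    have h2 : l < j := hR.1 _ _ hlj
    have h3 : k < j := h1.trans h2
    have hxm := mem_pattern_one_add (F := F) R h2.ne hlj
    have hhm := mem_pattern_one_add (F := F) P h1.ne hkl
    have hconj := hnormal _ hxm _ hhm
    rw [one_add_inv h2.ne, conjB h1.ne h2.ne h3.ne] at hconj
    refine hconj.2 k j h3.ne ?_
    have e1 : (1 : Matrix (Fin n) (Fin n) F) k j = 0 := Matrix.one_apply_ne h3.ne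
    have e2 : (Matrix.single k l (1:F)) k j = 0 :=
      Matrix.single_apply_of_ne _ _ _ _ _ (by rintro ⟨-, rfl⟩; exact h2.ne rfl)
    rw [Matrix.sub_apply, Matrix.add_apply, e1, e2, Matrix.single_apply_same,
      zero_add, zero_sub]
    exact neg_ne_zero.mpr one_ne_zero
  -- key entry analysis
  have main : ∀ i j, (x * (h - 1) * y) i j ≠ 0 → P i j := by
    intro i j hne
    rw [Matrix.mul_apply] at hne
    obtain ⟨l, -, hl⟩ := Finset.exists_ne_zero_of_sum_ne_zero hne
    have hyl : y l j ≠ 0 := right_ne_zero_of_mul hl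
    have hxl : (x * (h - 1)) i l ≠ 0 := left_ne_zero_of_mul hl
    rw [Matrix.mul_apply] at hxl
    obtain ⟨k, -, hk⟩ := Finset.exists_ne_zero_of_sum_ne_zero hxl
    have hxk : x i k ≠ 0 := left_ne_zero_of_mul hk
    have hhk : (h - 1) k l ≠ 0 := right_ne_zero_of_mul hk
    have hkl : k ≠ l := by
      rintro rfl
      rw [Matrix.sub_apply, hh.1, Matrix.one_apply_eq, sub_self] at hhk
      exact hhk rfl
    have hPkl : P k l := by
      refine hh.2 k l hkl ?_
      rw [Matrix.sub_apply, Matrix.one_apply_ne hkl, sub_zero] at hhk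
      exact hhk
    have hik : i = k ∨ R i k := by
      by_cases hc : i = k
      · exact Or.inl hc
      · exact Or.inr (hx.2 i k hc hxk)
    have hlj : l = j ∨ R l j := by
      by_cases hc : l = j
      · exact Or.inl hc
      · exact Or.inr (hy.2 l j hc hyl)
    have hPil : P i l := by
      rcases hik with rfl | hik
      · exact hPkl
      · exact keyA i k l hik hPkl
    rcases hlj with rfl | hlj
    · exact hPil
    · exact keyB i l j hPil hlj
  constructor
  · intro i
    have h0 : (x * (h - 1) * y) i i = 0 := by
      by_contra hc
      exact absurd (hP.1 i i (main i i hc)) (lt_irrefl i)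
    rw [Matrix.add_apply, h0, Matrix.one_apply_eq, zero_add]
  · intro i j hij hne
    refine main i j ?_
    rw [Matrix.add_apply, Matrix.one_apply_ne hij, add_zero] at hne
    exact hne
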